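/- Suppose (H1) and (H2) hold with β > 0. Let φ̄ ∈ Γ be an upper solution and φ̲ a lower solution of −u'(t) + f(u_t) = 0 satisfying (C1) 0 ≤ φ̲(t) ≤ φ̄(t) ≤ K for all t ∈ ℝ, and (C3) t ↦ e^{βt}(φ̄(t) − φ̲(t)) is non-decreasing on ℝ. Define x₁(t) = ∫_{−∞}^{t} e^{−β(t−s)} H(φ̄)(s) ds. Then both functions t ↦ e^{βt}(φ̄(t) − x₁(t)) and t ↦ e^{βt}(x₁(t) − φ̲(t)) are non-decreasing on ℝ. -/

import Mathlib

open Real Filter MeasureTheory Set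


lemma myIntegrableOn_exp_mul_Iic (β t : ℝ) (hβ : 0 < β) :
    IntegrableOn (fun s => Real.exp (β * s)) (Set.Iic t) := by
  have h1 : Integrable ((Set.Iic (β * t)).indicator Real.exp) :=
    (integrable_indicator_iff measurableSet_Iic).2 (integrableOn_exp_Iic (β * t))
  have h2 := (integrable_comp_mul_left_iff ((Set.Iic (β * t)).indicator Real.exp)
    (ne_of_gt hβ)).2 h1
  rw [← integrable_indicator_iff (measurableSet_Iic : MeasurableSet (Set.Iic t))]
  refine h2.congr (Filter.Eventually.of_forall fun x => ?_)
  simp only [Set.indicator_apply, Set.mem_Iic]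
  by_cases hx : x ≤ t
  · rw [if_pos hx, if_pos (mul_le_mul_of_nonneg_left hx hβ.le)]
  · rw [if_neg hx, if_neg (fun h => hx (le_of_mul_le_mul_left h hβ))]

-- average limit
lemma myAvg (ψ : ℝ → ℝ) (hψ : Continuous ψ) (t : ℝ) :
    Tendsto (fun n : ℕ => (∫ r in t..(t + (1:ℝ)/(n+1)), ψ r) * ((n:ℝ)+1)) atTop (nhds (ψ t)) := by
  have hF : HasDerivAt (fun u => ∫ x in t..u, ψ x) (ψ t) t :=
    intervalIntegral.integral_hasDerivAt_right (hψ.intervalIntegrable t t)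
      (hψ.stronglyMeasurableAtFilter volume (nhds t)) hψ.continuousAt
  rw [hasDerivAt_iff_tendsto_slope] at hF
  have hs : Tendsto (fun n : ℕ => t + (1:ℝ)/(n+1)) atTop (nhdsWithin t {t}ᶜ) := by
    rw [tendsto_nhdsWithin_iff]
    constructor
    · have : Tendsto (fun n : ℕ => (1:ℝ)/(n+1)) atTop (nhds 0) := tendsto_one_div_add_atTop_nhds_zero_nat
      simpa using (tendsto_const_nhds (x := t)).add this
    · filter_upwards with n
      have : (0:ℝ) < 1/(n+1) := by positivity
      simp only [Set.mem_compl_iff, Set.mem_singleton_iff]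
      linarith
  have := hF.comp hs
  convert this using 2 with n
  have hn : (0:ℝ) < 1/(n+1) := by positivity
  simp only [Function.comp_apply, slope_def_field]
  rw [intervalIntegral.integral_same]
  rw [div_eq_mul_inv]
  congr 1
  · congr 1
    ring
  · have h : t + 1 * ((n:ℝ)+1)⁻¹ - t = ((n:ℝ)+1)⁻¹ := by ring
    rw [h, inv_inv]

lemma myQuotInt (ψ : ℝ → ℝ) (hψ : Continuous ψ) (a b s : ℝ) (hab : a ≤ b) (hs : 0 < s) :
    ∫ r in Set.Ioc a b, (ψ (r + s) - ψ r) / s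
      = ((∫ r in b..(b + s), ψ r) - ∫ r in a..(a + s), ψ r) / s := by
  rw [← intervalIntegral.integral_of_le hab, intervalIntegral.integral_div]
  congr 1
  have hcont : Continuous fun x => ψ (x + s) := hψ.comp (continuous_add_right s)
  rw [intervalIntegral.integral_sub (hcont.intervalIntegrable _ _)
      (hψ.intervalIntegrable _ _)]
  rw [intervalIntegral.integral_comp_add_right]
  have h1 : (∫ x in a..(a + s), ψ x) + ∫ x in (a + s)..(b + s), ψ x = ∫ x in a..(b + s), ψ x :=
    intervalIntegral.integral_add_adjacent_intervals (hψ.intervalIntegrable _ _)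
      (hψ.intervalIntegrable _ _)
  have h2 : (∫ x in a..b, ψ x) + ∫ x in b..(b + s), ψ x = ∫ x in a..(b + s), ψ x :=
    intervalIntegral.integral_add_adjacent_intervals (hψ.intervalIntegrable _ _)
      (hψ.intervalIntegrable _ _)
  linarith

lemma myRevFatou (a b : ℝ) (hab : a ≤ b) (q : ℕ → ℝ → ℝ) (hqc : ∀ n, Continuous (q n))
    (g : ℝ → ℝ) (hg : IntegrableOn g (Set.Ioc a b)) (C : ℝ)
    (hqC : ∀ n, ∀ r ∈ Set.Ioc a b, q n r ≤ C)
    (hlim : ∀ᵐ r ∂(volume.restrict (Set.Ioc a b)), Tendsto (fun n => q n r) atTop (nhds (g r)))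
    (ℓ : ℝ) (hl : Tendsto (fun n => ∫ r in Set.Ioc a b, q n r) atTop (nhds ℓ)) :
    ℓ ≤ ∫ r in Set.Ioc a b, g r := by
  set μ := volume.restrict (Set.Ioc a b) with hμdef
  have hmem : ∀ᵐ r ∂μ, r ∈ Set.Ioc a b := ae_restrict_mem measurableSet_Ioc
  have hgC : ∀ᵐ r ∂μ, g r ≤ C := by
    filter_upwards [hlim, hmem] with r h1 h2
    exact le_of_tendsto h1 (Filter.Eventually.of_forall (fun n => hqC n r h2))
  have hqint : ∀ n, Integrable (q n) μ := fun n => (hqc n).integrableOn_Ioc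
  have hμuniv : μ Set.univ = ENNReal.ofReal (b - a) := by
    rw [hμdef, Measure.restrict_apply_univ, Real.volume_Ioc]
  have hVol : (μ Set.univ).toReal = b - a := by
    rw [hμuniv, ENNReal.toReal_ofReal (by linarith)]
  -- ∫ q n ≤ C * (b - a)
  have hqle : ∀ n, (∫ r, q n r ∂μ) ≤ C * (b - a) := by
    intro n
    have := setIntegral_mono_on (μ := volume) (s := Set.Ioc a b) (hqint n)
      (integrableOn_const (by rw [Real.volume_Ioc]; exact ENNReal.ofReal_ne_top))
      measurableSet_Ioc (hqC n)
    calc (∫ r, q n r ∂μ) ≤ ∫ _ in Set.Ioc a b, C := this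
      _ = C * (b - a) := by
        rw [setIntegral_const, smul_eq_mul, measureReal_def, Real.volume_Ioc,
          ENNReal.toReal_ofReal (by linarith), mul_comm]
  have hlC : ℓ ≤ C * (b - a) := le_of_tendsto hl (Filter.Eventually.of_forall hqle)
  -- Fatou on ofReal (C - q n)
  have hFatou := lintegral_liminf_le
    (μ := μ) (f := fun n r => ENNReal.ofReal (C - q n r)) (u := atTop)
    (fun n => (measurable_const.sub (hqc n).measurable).ennreal_ofReal)
  have hliminf_pt : ∀ᵐ r ∂μ,
      Filter.liminf (fun n => ENNReal.ofReal (C - q n r)) atTop = ENNReal.ofReal (C - g r) := by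
    filter_upwards [hlim] with r h1
    exact ((ENNReal.continuous_ofReal.tendsto _).comp
      ((tendsto_const_nhds (x := C)).sub h1)).liminf_eq
  have hL : ∫⁻ r, Filter.liminf (fun n => ENNReal.ofReal (C - q n r)) atTop ∂μ
      = ENNReal.ofReal (∫ r, (C - g r) ∂μ) := by
    rw [lintegral_congr_ae hliminf_pt]
    have hCg : Integrable (fun r => C - g r) μ := (integrable_const C).sub hg
    rw [← ofReal_integral_eq_lintegral_ofReal hCg
      (hgC.mono (fun r hr => by simp [sub_nonneg, hr]))]
  have hRn : ∀ n, (∫⁻ r, ENNReal.ofReal (C - q n r) ∂μ) = ENNReal.ofReal (C * (b - a) - ∫ r, q n r ∂μ) := by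
    intro n
    have hCq : Integrable (fun r => C - q n r) μ := (integrable_const C).sub (hqint n)
    rw [← ofReal_integral_eq_lintegral_ofReal hCq
      ((hmem.mono (fun r hr => by simp [sub_nonneg, hqC n r hr])))]
    congr 1
    rw [integral_sub (integrable_const C) (hqint n), integral_const, smul_eq_mul, measureReal_def, hVol, mul_comm]
  have hRlim : Tendsto (fun n => ∫⁻ r, ENNReal.ofReal (C - q n r) ∂μ) atTop
      (nhds (ENNReal.ofReal (C * (b - a) - ℓ))) := by
    simp_rw [hRn]
    exact (ENNReal.continuous_ofReal.tendsto _).comp ((tendsto_const_nhds).sub hl)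
  have hRliminf : Filter.liminf (fun n => ∫⁻ r, ENNReal.ofReal (C - q n r) ∂μ) atTop
      = ENNReal.ofReal (C * (b - a) - ℓ) := hRlim.liminf_eq
  rw [hL, hRliminf] at hFatou
  have := (ENNReal.ofReal_le_ofReal_iff (by linarith)).1 hFatou
  have hsub : (∫ r, (C - g r) ∂μ) = C * (b - a) - ∫ r, g r ∂μ := by
    rw [integral_sub (integrable_const C) hg, integral_const, smul_eq_mul, measureReal_def, hVol, mul_comm]
  rw [hsub] at this
  linarith

lemma myKey (a b : ℝ) (hab : a ≤ b) (ψ g : ℝ → ℝ) (hψ : Continuous ψ) (C : ℝ)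
    (hub : ∀ n : ℕ, ∀ r ∈ Set.Ioc a b,
      (ψ (r + 1/((n:ℝ)+1)) - ψ r) / (1/((n:ℝ)+1)) ≤ C)
    (hg : IntegrableOn g (Set.Ioc a b))
    (hlim : ∀ᵐ r ∂(volume : Measure ℝ), r ∈ Set.Ioc a b →
      Tendsto (fun n : ℕ => (ψ (r + 1/((n:ℝ)+1)) - ψ r) / (1/((n:ℝ)+1))) atTop (nhds (g r))) :
    ψ b - ψ a ≤ ∫ r in Set.Ioc a b, g r := by
  set q : ℕ → ℝ → ℝ := fun n r => (ψ (r + 1/((n:ℝ)+1)) - ψ r) / (1/((n:ℝ)+1)) with hq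
  have hqc : ∀ n, Continuous (q n) := fun n =>
    ((hψ.comp (continuous_add_right _)).sub hψ).div_const _
  have hl : Tendsto (fun n => ∫ r in Set.Ioc a b, q n r) atTop (nhds (ψ b - ψ a)) := by
    have heq : ∀ n : ℕ, (∫ r in Set.Ioc a b, q n r)
        = (∫ r in b..(b + 1/((n:ℝ)+1)), ψ r) * ((n:ℝ)+1)
          - (∫ r in a..(a + 1/((n:ℝ)+1)), ψ r) * ((n:ℝ)+1) := by
      intro n
      have hn : (0:ℝ) < 1/((n:ℝ)+1) := by positivity
      rw [hq]
      rw [myQuotInt ψ hψ a b _ hab hn, sub_div, one_div, div_eq_mul_inv, div_eq_mul_inv, inv_inv]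
    rw [funext heq]
    exact (myAvg ψ hψ b).sub (myAvg ψ hψ a)
  exact myRevFatou a b hab q hqc g hg C hub
    ((ae_restrict_iff' measurableSet_Ioc).2 hlim) _ hl

lemma myKeyGe (a b : ℝ) (hab : a ≤ b) (ψ g : ℝ → ℝ) (hψ : Continuous ψ) (c : ℝ)
    (hlb : ∀ n : ℕ, ∀ r ∈ Set.Ioc a b,
      c ≤ (ψ (r + 1/((n:ℝ)+1)) - ψ r) / (1/((n:ℝ)+1)))
    (hg : IntegrableOn g (Set.Ioc a b))
    (hlim : ∀ᵐ r ∂(volume : Measure ℝ), r ∈ Set.Ioc a b →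
      Tendsto (fun n : ℕ => (ψ (r + 1/((n:ℝ)+1)) - ψ r) / (1/((n:ℝ)+1))) atTop (nhds (g r))) :
    ∫ r in Set.Ioc a b, g r ≤ ψ b - ψ a := by
  have h := myKey a b hab (fun t => -ψ t) (fun r => -g r) hψ.neg (-c)
    (fun n r hr => by
      have := hlb n r hr
      have hgoal : (-ψ (r + 1/((n:ℝ)+1)) - -ψ r) / (1/((n:ℝ)+1))
          = -((ψ (r + 1/((n:ℝ)+1)) - ψ r) / (1/((n:ℝ)+1))) := by ring
      rw [hgoal]; linarith)
    hg.neg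
    (hlim.mono (fun r hr hmem => by
      have := (hr hmem).neg
      convert this using 2 with n
      ring))
  rw [integral_neg] at h
  have h' : -ψ b - -ψ a ≤ -∫ r in Set.Ioc a b, g r := h
  linarith

lemma myQuotTendsto (ψ : ℝ → ℝ) (r d : ℝ) (h : HasDerivAt ψ d r) :
    Tendsto (fun n : ℕ => (ψ (r + 1/((n:ℝ)+1)) - ψ r) / (1/((n:ℝ)+1))) atTop (nhds d) := by
  rw [hasDerivAt_iff_tendsto_slope] at h
  have hs : Tendsto (fun n : ℕ => r + 1/((n:ℝ)+1)) atTop (nhdsWithin r {r}ᶜ) := by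
    rw [tendsto_nhdsWithin_iff]
    constructor
    · have : Tendsto (fun n : ℕ => (1:ℝ)/(n+1)) atTop (nhds 0) :=
        tendsto_one_div_add_atTop_nhds_zero_nat
      simpa using (tendsto_const_nhds (x := r)).add this
    · filter_upwards with n
      have : (0:ℝ) < 1/((n:ℝ)+1) := by positivity
      simp only [Set.mem_compl_iff, Set.mem_singleton_iff]
      linarith
  have := h.comp hs
  convert this using 2 with n
  simp only [Function.comp_apply, slope_def_field]
  rw [add_sub_cancel_left]

/-- The segment `u_t ∈ C([−τ,0],ℝ)` of a function `u : ℝ → ℝ`, `u_t(s) = u(t+s)`. -/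
def seg (τ : ℝ) (u : ℝ → ℝ) (t : ℝ) : Set.Icc (-τ) (0 : ℝ) → ℝ :=
  fun s => u (t + s.1)

set_option maxHeartbeats 1000000 in
/-- Under (H1) and (H2) with `β > 0`, if `φ̄ ∈ Γ` is an upper solution of
`−u'(t) + f(u_t) = 0`, `φ̲` is a lower solution satisfying (C1) and (C3), and
`x₁(t) = ∫_{−∞}^t e^{−β(t−s)} H(φ̄)(s) ds`, then `t ↦ e^{βt}(φ̄(t) − x₁(t))` and
`t ↦ e^{βt}(x₁(t) − φ̲(t))` are non-decreasing on `ℝ`. -/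
theorem x1_weighted_differences_monotone
    (τ : ℝ) (hτ : 0 < τ)
    (f : (Set.Icc (-τ) (0 : ℝ) → ℝ) → ℝ)
    (hf : Continuous fun φ : C(Set.Icc (-τ) (0 : ℝ), ℝ) => f ⇑φ)
    (K : ℝ) (hK : 0 < K)
    -- (H1)
    (hH1₀ : f (fun _ => (0 : ℝ)) = 0) (hH1K : f (fun _ => K) = 0)
    (hH1ne : ∀ u : ℝ, 0 < u → u < K → f (fun _ => u) ≠ 0)
    (β : ℝ) (hβ : 0 < β)
    -- (H2)
    (hH2 : ∀ φ ψ : Set.Icc (-τ) (0 : ℝ) → ℝ, Continuous φ → Continuous ψ →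
      (∀ s, 0 ≤ ψ s ∧ ψ s ≤ φ s ∧ φ s ≤ K) →
      Monotone (fun s : Set.Icc (-τ) (0 : ℝ) => Real.exp (β * s.1) * (φ s - ψ s)) →
      0 ≤ f φ - f ψ +
        β * (φ ⟨0, Set.right_mem_Icc.mpr (neg_nonpos.mpr hτ.le)⟩ -
             ψ ⟨0, Set.right_mem_Icc.mpr (neg_nonpos.mpr hτ.le)⟩))
    -- φ̄ ∈ Γ
    (φb : ℝ → ℝ) (hφbc : Continuous φb) (hφbm : Monotone φb)
    (hφb₀ : Tendsto φb atBot (nhds 0)) (hφbK : Tendsto φb atTop (nhds K))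
    (hφbΓ : ∀ s : ℝ, 0 < s →
      Monotone fun t : ℝ => Real.exp (β * t) * (φb (t + s) - φb t))
    -- φ̄ is an upper solution
    (hup : ∃ D : ℝ → ℝ, (∀ᵐ t ∂(volume : Measure ℝ), HasDerivAt φb (D t) t) ∧
      (∃ M : ℝ, ∀ᵐ t ∂(volume : Measure ℝ), |D t| ≤ M) ∧
      (∀ᵐ t ∂(volume : Measure ℝ), f (seg τ φb t) ≤ D t))
    -- φ̲ is a lower solution satisfying (C1) and (C3)
    (φl : ℝ → ℝ) (hφlc : Continuous φl)
    (hlow : ∃ D : ℝ → ℝ, (∀ᵐ t ∂(volume : Measure ℝ), HasDerivAt φl (D t) t) ∧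
      (∃ M : ℝ, ∀ᵐ t ∂(volume : Measure ℝ), |D t| ≤ M) ∧
      (∀ᵐ t ∂(volume : Measure ℝ), D t ≤ f (seg τ φl t)))
    (hC1 : ∀ t : ℝ, 0 ≤ φl t ∧ φl t ≤ φb t ∧ φb t ≤ K)
    (hC3 : Monotone fun t : ℝ => Real.exp (β * t) * (φb t - φl t))
    -- x₁
    (x₁ : ℝ → ℝ)
    (hx₁ : ∀ t : ℝ, x₁ t =
      ∫ s in Set.Iic t, Real.exp (-β * (t - s)) * (f (seg τ φb s) + β * φb s)) :
    (Monotone fun t : ℝ => Real.exp (β * t) * (φb t - x₁ t)) ∧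
      (Monotone fun t : ℝ => Real.exp (β * t) * (x₁ t - φl t)) := by
  classical
  obtain ⟨D, hD, ⟨M, hM⟩, hDf⟩ := hup
  obtain ⟨Dl, hDl, ⟨Ml, hMl⟩, hDlf⟩ := hlow
  have hexp_pos : ∀ t : ℝ, 0 < Real.exp (β * t) := fun t => Real.exp_pos _
  have hφb0 : ∀ t, 0 ≤ φb t := fun t => le_trans (hC1 t).1 (hC1 t).2.1
  have hφbK : ∀ t, φb t ≤ K := fun t => (hC1 t).2.2
  -- continuity of r ↦ f (seg τ φb r)
  have hS0 : Continuous fun p : ℝ × (Set.Icc (-τ) (0:ℝ)) => φb (p.1 + (p.2 : ℝ)) :=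
    hφbc.comp (continuous_fst.add (continuous_subtype_val.comp continuous_snd))
  set S : C(ℝ, C(Set.Icc (-τ) (0:ℝ), ℝ)) := ContinuousMap.curry ⟨_, hS0⟩ with hSdef
  have hfS : Continuous fun r => f (seg τ φb r) := hf.comp S.continuous
  -- limit of f ∘ seg at -∞
  have hfS0 : Tendsto (fun r => f (seg τ φb r)) atBot (nhds 0) := by
    have hS'0 : Tendsto (fun r => S r) atBot
        (nhds (ContinuousMap.const (Set.Icc (-τ) (0:ℝ)) 0)) := by
      rw [tendsto_iff_dist_tendsto_zero]
      apply squeeze_zero (fun r => dist_nonneg) (fun r => ?_) hφb₀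
      apply ContinuousMap.dist_le (hφb0 r) |>.2
      intro u
      have h1 : φb (r + u.1) ≤ φb r := hφbm (by linarith [u.2.2])
      have h2 : 0 ≤ φb (r + u.1) := hφb0 _
      simp only [ContinuousMap.const_apply, Real.dist_eq, sub_zero]
      show |φb (r + u.1)| ≤ φb r
      rw [abs_of_nonneg h2]
      exact h1
    have := (hf.tendsto _).comp hS'0
    simp only [ContinuousMap.coe_const] at this
    convert this using 2
    · rfl
    rw [show (Function.const (Set.Icc (-τ) (0:ℝ)) (0:ℝ)) = (fun _ => (0:ℝ)) from rfl] at this ⊢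
    rw [hH1₀]
  -- bound for f ∘ seg on half-lines
  have hbound : ∀ t : ℝ, ∃ c : ℝ, 0 ≤ c ∧ ∀ r ≤ t, |f (seg τ φb r)| ≤ c := by
    intro t
    have h1 := hfS0.eventually (Metric.ball_mem_nhds (0:ℝ) one_pos)
    rw [eventually_atBot] at h1
    obtain ⟨A, hA⟩ := h1
    obtain ⟨c', hc'⟩ := (isCompact_Icc (a := A) (b := t)).exists_bound_of_continuousOn
      hfS.continuousOn
    refine ⟨max c' 1, le_trans zero_le_one (le_max_right _ _), fun r hr => ?_⟩
    rcases le_or_gt r A with h | h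
    · have := hA r h
      simp only [Metric.mem_ball, Real.dist_eq, sub_zero] at this
      exact le_trans this.le (le_max_right _ _)
    · exact le_trans (hc' r ⟨h.le, hr⟩) (le_max_left _ _)
  -- integrability of s ↦ exp (β s) * H s on half-lines
  have hIntIic : ∀ t : ℝ, IntegrableOn
      (fun s => Real.exp (β*s) * (f (seg τ φb s) + β * φb s)) (Set.Iic t) := by
    intro t
    obtain ⟨c, hc0, hc⟩ := hbound t
    have hcontH : Continuous fun s => Real.exp (β*s) * (f (seg τ φb s) + β * φb s) :=
      ((Real.continuous_exp.comp (continuous_const.mul continuous_id')).mul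
        (hfS.add (continuous_const.mul hφbc)))
    refine Integrable.mono' ((myIntegrableOn_exp_mul_Iic β t hβ).const_mul (c + β*K))
      hcontH.aestronglyMeasurable ?_
    rw [ae_restrict_iff' measurableSet_Iic]
    filter_upwards with s hs
    have h1 : |f (seg τ φb s) + β * φb s| ≤ c + β * K := by
      refine le_trans (abs_add_le _ _) (add_le_add (hc s hs) ?_)
      rw [abs_mul, abs_of_pos hβ, abs_of_nonneg (hφb0 s)]
      exact mul_le_mul_of_nonneg_left (hφbK s) hβ.le
    rw [Real.norm_eq_abs, abs_mul, abs_of_pos (hexp_pos s)]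
    calc Real.exp (β*s) * |f (seg τ φb s) + β * φb s| ≤ Real.exp (β*s) * (c + β*K) :=
          mul_le_mul_of_nonneg_left h1 (hexp_pos s).le
      _ = (c + β*K) * Real.exp (β*s) := by ring
  -- weighted x₁ as integral of exp (β s) * H s
  have hEx : ∀ t : ℝ, Real.exp (β*t) * x₁ t
      = ∫ s in Set.Iic t, Real.exp (β*s) * (f (seg τ φb s) + β * φb s) := by
    intro t
    rw [hx₁ t, ← integral_const_mul]
    refine setIntegral_congr_fun measurableSet_Iic (fun s _ => ?_)
    show Real.exp (β*t) * (Real.exp (-β * (t - s)) * _) = _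
    rw [← mul_assoc, ← Real.exp_add]
    congr 2
    ring
  -- increments of the weighted x₁
  have hExDiff : ∀ a b : ℝ, a ≤ b → Real.exp (β*b) * x₁ b - Real.exp (β*a) * x₁ a
      = ∫ s in Set.Ioc a b, Real.exp (β*s) * (f (seg τ φb s) + β * φb s) := by
    intro a b hab
    rw [hEx a, hEx b, ← Set.Iic_union_Ioc_eq_Iic hab,
      setIntegral_union (Set.Iic_disjoint_Ioc le_rfl) measurableSet_Ioc (hIntIic a)
        ((hIntIic b).mono_set Set.Ioc_subset_Iic_self)]
    ring
  -- measurability of D and Dl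
  have hDmeas : AEStronglyMeasurable D (volume : Measure ℝ) := by
    refine aestronglyMeasurable_of_tendsto_ae atTop
      (f := fun (n : ℕ) (r : ℝ) => (φb (r + 1/((n:ℝ)+1)) - φb r) / (1/((n:ℝ)+1)))
      (fun n => (((hφbc.comp (continuous_add_right _)).sub hφbc).div_const _).aestronglyMeasurable)
      ?_
    filter_upwards [hD] with r hr
    exact myQuotTendsto φb r (D r) hr
  have hDlmeas : AEStronglyMeasurable Dl (volume : Measure ℝ) := by
    refine aestronglyMeasurable_of_tendsto_ae atTop
      (f := fun (n : ℕ) (r : ℝ) => (φl (r + 1/((n:ℝ)+1)) - φl r) / (1/((n:ℝ)+1)))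
      (fun n => (((hφlc.comp (continuous_add_right _)).sub hφlc).div_const _).aestronglyMeasurable)
      ?_
    filter_upwards [hDl] with r hr
    exact myQuotTendsto φl r (Dl r) hr
  -- H2 pointwise comparison
  have hH2pt : ∀ s : ℝ, f (seg τ φl s) + β * φl s ≤ f (seg τ φb s) + β * φb s := by
    intro s
    have hcb : Continuous (seg τ φb s) := hφbc.comp (continuous_const.add continuous_subtype_val)
    have hcl : Continuous (seg τ φl s) := hφlc.comp (continuous_const.add continuous_subtype_val)
    have hbd : ∀ u : Set.Icc (-τ) (0:ℝ),
        0 ≤ seg τ φl s u ∧ seg τ φl s u ≤ seg τ φb s u ∧ seg τ φb s u ≤ K :=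
      fun u => hC1 (s + u.1)
    have hmono : Monotone (fun u : Set.Icc (-τ) (0:ℝ) =>
        Real.exp (β * u.1) * (seg τ φb s u - seg τ φl s u)) := by
      intro u v huv
      have h1 := hC3 (show s + u.1 ≤ s + v.1 from add_le_add_right (Subtype.coe_le_coe.mpr huv) s)
      simp only at h1 ⊢
      have e1 : Real.exp (β * u.1) = Real.exp (-(β*s)) * Real.exp (β * (s + u.1)) := by
        rw [← Real.exp_add]; congr 1; ring
      have e2 : Real.exp (β * v.1) = Real.exp (-(β*s)) * Real.exp (β * (s + v.1)) := by
        rw [← Real.exp_add]; congr 1; ring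
      show Real.exp (β * u.1) * (φb (s + u.1) - φl (s + u.1))
        ≤ Real.exp (β * v.1) * (φb (s + v.1) - φl (s + v.1))
      rw [e1, e2, mul_assoc, mul_assoc]
      exact mul_le_mul_of_nonneg_left h1 (Real.exp_pos _).le
    have h2 := hH2 (seg τ φb s) (seg τ φl s) hcb hcl hbd hmono
    have e0b : seg τ φb s ⟨0, Set.right_mem_Icc.mpr (neg_nonpos.mpr hτ.le)⟩ = φb s := by
      show φb (s + 0) = φb s
      rw [add_zero]
    have e0l : seg τ φl s ⟨0, Set.right_mem_Icc.mpr (neg_nonpos.mpr hτ.le)⟩ = φl s := by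
      show φl (s + 0) = φl s
      rw [add_zero]
    rw [e0b, e0l] at h2
    nlinarith [h2]
  set ψb : ℝ → ℝ := fun t => Real.exp (β*t) * φb t with hψbdef
  set ψl : ℝ → ℝ := fun t => Real.exp (β*t) * φl t with hψldef
  have hψbc : Continuous ψb :=
    (Real.continuous_exp.comp (continuous_const.mul continuous_id')).mul hφbc
  have hψlc : Continuous ψl :=
    (Real.continuous_exp.comp (continuous_const.mul continuous_id')).mul hφlc
  -- the main interval estimates
  have main : ∀ a b : ℝ, a ≤ b →
      (∫ s in Set.Ioc a b, Real.exp (β*s) * (f (seg τ φb s) + β * φb s))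
          ≤ ψb b - ψb a
        ∧ ψl b - ψl a
          ≤ ∫ s in Set.Ioc a b, Real.exp (β*s) * (f (seg τ φb s) + β * φb s) := by
    intro a b hab
    -- a good differentiability point to the right of b
    have hTex : ∃ T, T ∈ Set.Ioc b (b+1) ∧ HasDerivAt φb (D T) T := by
      by_contra hcon
      push_neg at hcon
      have hsub : Set.Ioc b (b+1) ⊆ {t | ¬ HasDerivAt φb (D t) t} := fun t ht => hcon t ht
      have h0 : volume {t | ¬ HasDerivAt φb (D t) t} = 0 := ae_iff.1 hD
      have h1 : volume (Set.Ioc b (b+1)) = 0 :=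
        le_antisymm (le_trans (measure_mono hsub) (le_of_eq h0)) (zero_le)
      rw [Real.volume_Ioc, show b+1-b = (1:ℝ) by ring] at h1
      simp at h1
    obtain ⟨T, hTmem, hTd⟩ := hTex
    have hbT : b ≤ T := hTmem.1.le
    -- a bound for the forward difference quotients of φb at T
    have hBex : ∃ B : ℝ, ∀ s : ℝ, 0 < s → s ≤ 1 → (φb (T + s) - φb T) / s ≤ B := by
      have hT' := hasDerivAt_iff_tendsto_slope.1 hTd
      have hev : ∀ᶠ x in nhdsWithin T {T}ᶜ, slope φb T x < D T + 1 :=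
        hT'.eventually_lt_const (lt_add_one (D T))
      rw [eventually_nhdsWithin_iff, Metric.eventually_nhds_iff] at hev
      obtain ⟨ε, hε, hball⟩ := hev
      have hd2 : 0 < min ε 1 / 2 := by positivity
      refine ⟨max (D T + 1) (K / (min ε 1 / 2)), fun s hs hs1 => ?_⟩
      rcases lt_or_ge s (min ε 1 / 2) with h | h
      · have hx : dist (T + s) T < ε := by
          rw [Real.dist_eq, add_sub_cancel_left, abs_of_pos hs]
          have : min ε 1 ≤ ε := min_le_left _ _
          linarith
        have hne : T + s ∈ ({T}ᶜ : Set ℝ) := by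
          simp only [Set.mem_compl_iff, Set.mem_singleton_iff]
          intro hTT
          have : s = 0 := by linarith [congrArg (fun z => z - T) hTT]
          linarith
        have h2 := hball hx hne
        rw [slope_def_field, add_sub_cancel_left] at h2
        exact le_trans h2.le (le_max_left _ _)
      · have hnum : φb (T + s) - φb T ≤ K := by linarith [hφbK (T+s), hφb0 T]
        have h3 : (φb (T + s) - φb T)/s ≤ K / (min ε 1 / 2) :=
          div_le_div₀ hK.le hnum hd2 h
        exact le_trans h3 (le_max_right _ _)
    obtain ⟨B, hB⟩ := hBex
    have hB0 : (0:ℝ) ≤ B := by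
      refine le_trans ?_ (hB 1 one_pos le_rfl)
      have h := hφbm (show T ≤ T + 1 by linarith)
      have : (0:ℝ) ≤ φb (T + 1) - φb T := by linarith
      apply div_nonneg this zero_le_one
    set Cq : ℝ := Real.exp (β*(b+1)) * (Real.exp (β*(T - a)) * B)
        + Real.exp (β*(b+1)) * β * K with hCqdef
    -- upper bound for difference quotients of ψb on (a, b]
    have hquotb_ub : ∀ s : ℝ, 0 < s → s ≤ 1 → ∀ r ∈ Set.Ioc a b,
        (ψb (r + s) - ψb r)/s ≤ Cq := by
      intro s hs hs1 r hr
      have hrb : r ≤ b := hr.2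
      have hra : a < r := hr.1
      have e : (ψb (r + s) - ψb r)/s
          = Real.exp (β*(r+s)) * ((φb (r + s) - φb r)/s)
            + ((Real.exp (β*(r+s)) - Real.exp (β*r))/s) * φb r := by
        rw [hψbdef]
        field_simp
        ring
      have t1 : Real.exp (β*(r+s)) ≤ Real.exp (β*(b+1)) := by
        apply Real.exp_le_exp.2
        have : r + s ≤ b + 1 := by linarith
        exact mul_le_mul_of_nonneg_left this hβ.le
      have hX0 : 0 ≤ (φb (r + s) - φb r)/s :=
        div_nonneg (sub_nonneg.2 (hφbm (by linarith))) hs.le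
      have hQT0 : 0 ≤ (φb (T + s) - φb T)/s :=
        div_nonneg (sub_nonneg.2 (hφbm (by linarith))) hs.le
      have t2 : (φb (r + s) - φb r)/s ≤ Real.exp (β*(T - a)) * B := by
        have hΓ := hφbΓ s hs (show r ≤ T by linarith [hTmem.1])
        simp only at hΓ
        have h1 : Real.exp (β*r) * ((φb (r + s) - φb r)/s)
            ≤ Real.exp (β*T) * ((φb (T + s) - φb T)/s) := by
          rw [mul_div_assoc', mul_div_assoc']
          exact (div_le_div_iff_of_pos_right hs).2 hΓ
        have h2 : (φb (r + s) - φb r)/s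
            ≤ (Real.exp (β*T) / Real.exp (β*r)) * ((φb (T + s) - φb T)/s) := by
          rw [div_mul_eq_mul_div, le_div_iff₀ (Real.exp_pos _)]
          calc (φb (r + s) - φb r)/s * Real.exp (β*r)
              = Real.exp (β*r) * ((φb (r + s) - φb r)/s) := by ring
            _ ≤ Real.exp (β*T) * ((φb (T + s) - φb T)/s) := h1
        have h3 : Real.exp (β*T) / Real.exp (β*r) ≤ Real.exp (β*(T - a)) := by
          rw [← Real.exp_sub]
          apply Real.exp_le_exp.2
          have : β*(T - r) ≤ β*(T - a) := mul_le_mul_of_nonneg_left (by linarith) hβ.le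
          linarith
        calc (φb (r + s) - φb r)/s
            ≤ (Real.exp (β*T) / Real.exp (β*r)) * ((φb (T + s) - φb T)/s) := h2
          _ ≤ Real.exp (β*(T - a)) * B := by
              apply mul_le_mul h3 (hB s hs hs1) hQT0 (Real.exp_nonneg _)
      have t3 : (Real.exp (β*(r+s)) - Real.exp (β*r))/s ≤ Real.exp (β*(b+1)) * β := by
        rw [div_le_iff₀ hs]
        have h5 : Real.exp (β*r) = Real.exp (β*(r+s)) * Real.exp (-(β*s)) := by
          rw [← Real.exp_add]; congr 1; ring
        have h6 : 1 - β*s ≤ Real.exp (-(β*s)) := by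
          have := Real.add_one_le_exp (-(β*s))
          linarith
        have h7 : Real.exp (β*(r+s)) - Real.exp (β*r)
            ≤ Real.exp (β*(r+s)) * (β*s) := by
          rw [h5]
          have := mul_le_mul_of_nonneg_left h6 (Real.exp_nonneg (β*(r+s)))
          nlinarith [Real.exp_pos (β*(r+s))]
        calc Real.exp (β*(r+s)) - Real.exp (β*r) ≤ Real.exp (β*(r+s)) * (β*s) := h7
          _ ≤ Real.exp (β*(b+1)) * (β*s) :=
              mul_le_mul_of_nonneg_right t1 (by positivity)
          _ = Real.exp (β*(b+1)) * β * s := by ring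
      have hediff0 : 0 ≤ (Real.exp (β*(r+s)) - Real.exp (β*r))/s := by
        apply div_nonneg _ hs.le
        have : β*r ≤ β*(r+s) := by nlinarith
        linarith [Real.exp_le_exp.2 this]
      rw [e, hCqdef]
      have term1 : Real.exp (β*(r+s)) * ((φb (r + s) - φb r)/s)
          ≤ Real.exp (β*(b+1)) * (Real.exp (β*(T - a)) * B) :=
        mul_le_mul t1 t2 hX0 (Real.exp_nonneg _)
      have term2 : ((Real.exp (β*(r+s)) - Real.exp (β*r))/s) * φb r
          ≤ Real.exp (β*(b+1)) * β * K :=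
        mul_le_mul t3 (hφbK r) (hφb0 r) (by positivity)
      linarith
    -- lower bound 0 for difference quotients of ψb
    have hquotb_lb : ∀ s : ℝ, 0 < s → ∀ r : ℝ, 0 ≤ (ψb (r + s) - ψb r)/s := by
      intro s hs r
      apply div_nonneg _ hs.le
      rw [hψbdef, sub_nonneg]
      apply mul_le_mul (Real.exp_le_exp.2 (by nlinarith)) (hφbm (by linarith)) (hφb0 r)
        (Real.exp_nonneg _)
    -- quotients of ψl are dominated by quotients of ψb
    have hquotl_ub : ∀ s : ℝ, 0 < s → ∀ r : ℝ,
        (ψl (r + s) - ψl r)/s ≤ (ψb (r + s) - ψb r)/s := by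
      intro s hs r
      apply (div_le_div_iff_of_pos_right hs).2
      have h1 := hC3 (show r ≤ r + s by linarith)
      simp only at h1
      rw [hψbdef, hψldef]
      simp only
      nlinarith [h1]
    set gb : ℝ → ℝ := fun r => Real.exp (β*r) * β * φb r + Real.exp (β*r) * D r with hgbdef
    set gl : ℝ → ℝ := fun r => Real.exp (β*r) * β * φl r + Real.exp (β*r) * Dl r with hgldef
    have hexpD : ∀ r : ℝ, HasDerivAt (fun t => Real.exp (β*t)) (Real.exp (β*r) * β) r := by
      intro r
      have h0 : HasDerivAt (fun t : ℝ => β*t) β r := by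
        simpa using (hasDerivAt_id r).const_mul β
      exact (Real.hasDerivAt_exp (β*r)).comp r h0
    have hlim_b : ∀ᵐ r ∂(volume : Measure ℝ), r ∈ Set.Ioc a b →
        Tendsto (fun n : ℕ => (ψb (r + 1/((n:ℝ)+1)) - ψb r)/(1/((n:ℝ)+1))) atTop
          (nhds (gb r)) := by
      filter_upwards [hD] with r hr _
      exact myQuotTendsto ψb r _ ((hexpD r).mul hr)
    have hlim_l : ∀ᵐ r ∂(volume : Measure ℝ), r ∈ Set.Ioc a b →
        Tendsto (fun n : ℕ => (ψl (r + 1/((n:ℝ)+1)) - ψl r)/(1/((n:ℝ)+1))) atTop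
          (nhds (gl r)) := by
      filter_upwards [hDl] with r hr _
      exact myQuotTendsto ψl r _ ((hexpD r).mul hr)
    have hexpc : Continuous fun r : ℝ => Real.exp (β*r) :=
      Real.continuous_exp.comp (continuous_const.mul continuous_id')
    have hgb_int : IntegrableOn gb (Set.Ioc a b) := by
      have hmeas : AEStronglyMeasurable gb (volume.restrict (Set.Ioc a b)) := by
        apply AEStronglyMeasurable.add
        · exact (((hexpc.mul continuous_const).mul hφbc).aestronglyMeasurable).restrict
        · exact (hexpc.aestronglyMeasurable.mul hDmeas).restrict
      refine Integrable.mono'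
        (g := fun _ => Real.exp (β*b) * β * K + Real.exp (β*b) * |M|) ?_ hmeas ?_
      · exact integrableOn_const measure_Ioc_lt_top.ne
      · rw [ae_restrict_iff' measurableSet_Ioc]
        filter_upwards [hM] with r hMr hr
        have hE : Real.exp (β*r) ≤ Real.exp (β*b) :=
          Real.exp_le_exp.2 (mul_le_mul_of_nonneg_left hr.2 hβ.le)
        rw [Real.norm_eq_abs]
        refine le_trans (abs_add_le _ _) (add_le_add ?_ ?_)
        · rw [abs_mul, abs_mul, abs_of_pos (hexp_pos r), abs_of_pos hβ,
            abs_of_nonneg (hφb0 r)]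
          exact mul_le_mul (mul_le_mul_of_nonneg_right hE hβ.le) (hφbK r) (hφb0 r)
            (by positivity)
        · rw [abs_mul, abs_of_pos (hexp_pos r)]
          exact mul_le_mul hE (le_trans hMr (le_abs_self M)) (abs_nonneg _)
            (Real.exp_nonneg _)
    have hgl_int : IntegrableOn gl (Set.Ioc a b) := by
      have hmeas : AEStronglyMeasurable gl (volume.restrict (Set.Ioc a b)) := by
        apply AEStronglyMeasurable.add
        · exact (((hexpc.mul continuous_const).mul hφlc).aestronglyMeasurable).restrict
        · exact (hexpc.aestronglyMeasurable.mul hDlmeas).restrict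
      refine Integrable.mono'
        (g := fun _ => Real.exp (β*b) * β * K + Real.exp (β*b) * |Ml|) ?_ hmeas ?_
      · exact integrableOn_const measure_Ioc_lt_top.ne
      · rw [ae_restrict_iff' measurableSet_Ioc]
        filter_upwards [hMl] with r hMr hr
        have hE : Real.exp (β*r) ≤ Real.exp (β*b) :=
          Real.exp_le_exp.2 (mul_le_mul_of_nonneg_left hr.2 hβ.le)
        have hφl0 : 0 ≤ φl r := (hC1 r).1
        have hφlK : φl r ≤ K := le_trans (hC1 r).2.1 (hφbK r)
        rw [Real.norm_eq_abs]
        refine le_trans (abs_add_le _ _) (add_le_add ?_ ?_)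
        · rw [abs_mul, abs_mul, abs_of_pos (hexp_pos r), abs_of_pos hβ,
            abs_of_nonneg hφl0]
          exact mul_le_mul (mul_le_mul_of_nonneg_right hE hβ.le) hφlK hφl0
            (by positivity)
        · rw [abs_mul, abs_of_pos (hexp_pos r)]
          exact mul_le_mul hE (le_trans hMr (le_abs_self Ml)) (abs_nonneg _)
            (Real.exp_nonneg _)
    have hΦH_int : IntegrableOn
        (fun s => Real.exp (β*s) * (f (seg τ φb s) + β * φb s)) (Set.Ioc a b) :=
      (hIntIic b).mono_set Set.Ioc_subset_Iic_self
    constructor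
    · have h1 : (∫ s in Set.Ioc a b, Real.exp (β*s) * (f (seg τ φb s) + β * φb s))
          ≤ ∫ r in Set.Ioc a b, gb r := by
        apply integral_mono_ae hΦH_int hgb_int
        apply ae_restrict_of_ae
        filter_upwards [hDf] with r hr
        have h2 : Real.exp (β*r) * f (seg τ φb r) ≤ Real.exp (β*r) * D r :=
          mul_le_mul_of_nonneg_left hr (Real.exp_nonneg _)
        rw [hgbdef]
        simp only
        nlinarith [h2]
      have h2 : (∫ r in Set.Ioc a b, gb r) ≤ ψb b - ψb a := by
        apply myKeyGe a b hab ψb gb hψbc 0 ?_ hgb_int hlim_b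
        intro n r _
        exact hquotb_lb (1/((n:ℝ)+1)) (by positivity) r
      linarith
    · have h1 : ψl b - ψl a ≤ ∫ r in Set.Ioc a b, gl r := by
        apply myKey a b hab ψl gl hψlc Cq ?_ hgl_int hlim_l
        intro n r hr
        have hs : (0:ℝ) < 1/((n:ℝ)+1) := by positivity
        have hs1 : (1:ℝ)/((n:ℝ)+1) ≤ 1 := by
          rw [div_le_one (by positivity)]
          have : (0:ℝ) ≤ (n:ℝ) := Nat.cast_nonneg n
          linarith
        exact le_trans (hquotl_ub _ hs r) (hquotb_ub _ hs hs1 r hr)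
      have h2 : (∫ r in Set.Ioc a b, gl r)
          ≤ ∫ s in Set.Ioc a b, Real.exp (β*s) * (f (seg τ φb s) + β * φb s) := by
        apply integral_mono_ae hgl_int hΦH_int
        apply ae_restrict_of_ae
        filter_upwards [hDlf] with r hr
        have h3 : Real.exp (β*r) * Dl r ≤ Real.exp (β*r) * f (seg τ φl r) :=
          mul_le_mul_of_nonneg_left hr (Real.exp_nonneg _)
        have h4 := mul_le_mul_of_nonneg_left (hH2pt r) (Real.exp_nonneg (β*r))
        rw [hgldef]
        simp only
        nlinarith [h3, h4]
      linarith
  constructor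
  · intro a b hab
    have h := (main a b hab).1
    have hE := hExDiff a b hab
    have h5 : Real.exp (β*b) * x₁ b - Real.exp (β*a) * x₁ a ≤ ψb b - ψb a := by
      rw [hE]; exact h
    rw [hψbdef] at h5
    simp only at h5
    show Real.exp (β*a) * (φb a - x₁ a) ≤ Real.exp (β*b) * (φb b - x₁ b)
    rw [mul_sub, mul_sub]
    linarith
  · intro a b hab
    have h := (main a b hab).2
    have hE := hExDiff a b hab
    have h5 : ψl b - ψl a ≤ Real.exp (β*b) * x₁ b - Real.exp (β*a) * x₁ a := by
      rw [hE]; exact h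
    rw [hψldef] at h5
    simp only at h5
    show Real.exp (β*a) * (x₁ a - φl a) ≤ Real.exp (β*b) * (x₁ b - φl b)
    rw [mul_sub, mul_sub]
    linarith
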